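/- For every simple graph G on n vertices with at least one vertex, the size of a maximum matching satisfies ν(G) ≥ δ(G)·n / (2(δ(G) + Δ(G))), where δ(G) and Δ(G) are the minimum and maximum degree of G (assuming δ(G) + Δ(G) > 0). -/
import Mathlib

open SimpleGraph Finset

theorem matching_number_ge_of_degrees {V : Type*} [Fintype V] [DecidableEq V] [Nonempty V]
    (G : SimpleGraph V) [DecidableRel G.Adj]
    (hpos : 0 < G.minDegree + G.maxDegree) :
    ∃ M : G.Subgraph, M.IsMatching ∧
      (G.minDegree : ℝ) * Fintype.card V / (2 * (G.minDegree + G.maxDegree))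
        ≤ (M.edgeSet.ncard : ℝ) := by
  classical
  set T : Set ℕ := {n | ∃ M : G.Subgraph, M.IsMatching ∧ M.edgeSet.ncard = n} with hT
  have hne : T.Nonempty := ⟨0, ⊥, fun v hv => absurd hv (by simp), by simp⟩
  have hbdd : BddAbove T := by
    refine ⟨Fintype.card (Sym2 V), fun n hn => ?_⟩
    obtain ⟨M, -, rfl⟩ := hn
    simpa [Set.ncard_univ] using Set.ncard_le_ncard (Set.subset_univ M.edgeSet) Set.finite_univ
  obtain ⟨M, hM, hMk⟩ : sSup T ∈ T := Nat.sSup_mem hne hbdd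
  set k := sSup T with hk
  have hmax : ∀ M' : G.Subgraph, M'.IsMatching → M'.edgeSet.ncard ≤ k :=
    fun M' hM' => le_csSup hbdd ⟨M', hM', rfl⟩
  refine ⟨M, hM, ?_⟩
  set S : Finset V := (Set.toFinite M.verts).toFinset with hS
  have hmemS : ∀ v, v ∈ S ↔ v ∈ M.verts := fun v => Set.Finite.mem_toFinset _
  -- |S| ≤ 2k
  have hcard : S.card ≤ 2 * k := by
    have hex : ∀ v ∈ S, ∃ e ∈ M.edgeSet, v ∈ e := by
      intro v hv
      obtain ⟨w, hw, -⟩ := hM ((hmemS v).1 hv)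
      exact ⟨s(v, w), hw, Sym2.mem_mk_left _ _⟩
    set f : V → Sym2 V := fun v =>
      if h : ∃ e ∈ M.edgeSet, v ∈ e then h.choose else s(v, v) with hf
    have hfe : ∀ v ∈ S, f v ∈ M.edgeSet ∧ v ∈ f v := by
      intro v hv
      have h := hex v hv
      simp only [hf, dif_pos h]
      exact ⟨h.choose_spec.1, h.choose_spec.2⟩
    have h1 : S.card ≤ 2 * (S.image f).card := by
      refine Finset.card_le_mul_card_image S 2 ?_
      intro e he
      obtain ⟨a, b⟩ := e
      have : S.filter (fun x => f x = s(a, b)) ⊆ {a, b} := by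
        intro v hv
        simp only [Finset.mem_filter] at hv
        have := (hfe v hv.1).2
        rw [hv.2] at this
        simpa [Finset.mem_insert] using this
      calc (S.filter (fun x => f x = s(a, b))).card ≤ ({a, b} : Finset V).card :=
            Finset.card_le_card this
        _ ≤ 2 := Finset.card_insert_le _ _ |>.trans (by simp)
    have h2 : (S.image f).card ≤ k := by
      have hsub : S.image f ⊆ (Set.toFinite M.edgeSet).toFinset := by
        intro e he
        obtain ⟨v, hv, rfl⟩ := Finset.mem_image.1 he
        exact (Set.Finite.mem_toFinset _).2 (hfe v hv).1
      calc (S.image f).card ≤ ((Set.toFinite M.edgeSet).toFinset).card :=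
            Finset.card_le_card hsub
        _ = M.edgeSet.ncard := (Set.ncard_eq_toFinset_card _ (Set.toFinite M.edgeSet)).symm
        _ = k := hMk
    omega
  -- independence of complement
  have hind : ∀ u, u ∉ M.verts → ∀ w, G.Adj u w → w ∈ M.verts := by
    intro u hu w hadj
    by_contra hw
    have hdisj : Disjoint M.support (G.subgraphOfAdj hadj).support := by
      rw [hM.support_eq_verts, support_subgraphOfAdj]
      rw [Set.disjoint_right]
      rintro x (rfl | rfl) <;> assumption
    have hM' : (M ⊔ G.subgraphOfAdj hadj).IsMatching :=
      hM.sup (Subgraph.IsMatching.subgraphOfAdj hadj) hdisj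
    have hes : (M ⊔ G.subgraphOfAdj hadj).edgeSet = insert s(u, w) M.edgeSet := by
      rw [Subgraph.edgeSet_sup, edgeSet_subgraphOfAdj, Set.union_singleton]
    have hnm : s(u, w) ∉ M.edgeSet := fun h => hu (M.edge_vert h)
    have := hmax _ hM'
    rw [hes, Set.ncard_insert_of_notMem hnm (Set.toFinite _), hMk] at this
    omega
  -- counting
  set U : Finset V := Sᶜ with hU
  have hnbr : ∀ u ∈ U, G.neighborFinset u ⊆ S := by
    intro u hu w hw
    rw [mem_neighborFinset] at hw
    have hu' : u ∉ M.verts := fun h => (Finset.mem_compl.1 hu) ((hmemS u).2 h)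
    exact (hmemS w).2 (hind u hu' w hw)
  have hsum : ∑ u ∈ U, G.degree u ≤ ∑ s ∈ S, G.degree s := by
    calc ∑ u ∈ U, G.degree u = ∑ u ∈ U, (S.filter (fun s => G.Adj u s)).card := by
          refine Finset.sum_congr rfl fun u hu => ?_
          have : S.filter (fun s => G.Adj u s) = G.neighborFinset u := by
            ext w
            simp only [Finset.mem_filter, mem_neighborFinset]
            exact ⟨fun h => h.2, fun h => ⟨hnbr u hu (by rwa [mem_neighborFinset]), h⟩⟩
          rw [this, degree]
      _ = ∑ u ∈ U, ∑ s ∈ S, if G.Adj u s then 1 else 0 := by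
          refine Finset.sum_congr rfl fun u _ => ?_
          rw [Finset.card_filter]
      _ = ∑ s ∈ S, ∑ u ∈ U, if G.Adj u s then 1 else 0 := Finset.sum_comm
      _ ≤ ∑ s ∈ S, G.degree s := by
          refine Finset.sum_le_sum fun s _ => ?_
          calc ∑ u ∈ U, (if G.Adj u s then 1 else 0)
              = (U.filter (fun u => G.Adj u s)).card := (Finset.card_filter _ _).symm
            _ ≤ (univ.filter (fun u => G.Adj u s)).card :=
                Finset.card_le_card (Finset.filter_subset_filter _ (Finset.subset_univ U))
            _ = G.degree s := by
                rw [degree, neighborFinset_eq_filter]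
                congr 1
                ext u
                simp [adj_comm]
  have hmin : G.minDegree * U.card ≤ ∑ u ∈ U, G.degree u := by
    simpa [mul_comm] using Finset.card_nsmul_le_sum U _ _ fun u _ => G.minDegree_le_degree u
  have hmaxd : ∑ s ∈ S, G.degree s ≤ G.maxDegree * S.card := by
    simpa [mul_comm] using Finset.sum_le_card_nsmul S _ _ fun s _ => G.degree_le_maxDegree s
  have hUS : U.card + S.card = Fintype.card V := by
    rw [hU]; exact Finset.card_compl_add_card S
  have hkey : G.minDegree * Fintype.card V ≤ 2 * k * (G.minDegree + G.maxDegree) := by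
    have h1 : G.minDegree * U.card ≤ G.maxDegree * S.card :=
      hmin.trans (hsum.trans hmaxd)
    nlinarith [hcard, hUS, h1, Nat.zero_le (G.minDegree * S.card)]
  have h2pos : (0 : ℝ) < 2 * ((G.minDegree : ℝ) + G.maxDegree) := by
    have h0 : (0 : ℝ) < ((G.minDegree + G.maxDegree : ℕ) : ℝ) := by exact_mod_cast hpos
    push_cast at h0
    linarith
  have hcast := (Nat.cast_le (α := ℝ)).2 hkey
  push_cast at hcast
  rw [div_le_iff₀ h2pos, hMk]
  nlinarith [hcast]
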